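/- Let n and m be natural numbers and let E₁, …, E_m be rationally defined ℂ-submodules of (Fin n → ℂ). Let W = exp(E₁) ∪ ⋯ ∪ exp(E_m), where exp(E) denotes the image of E under the componentwise exponential, and write 𝟙 for the constant function with value 1. Then the exponential tangent cone and the tangent cone of W at 𝟙 coincide and are both equal to the union of the subspaces: ETC₁(W) = tangentConeAt ℂ W 𝟙 = E₁ ∪ ⋯ ∪ E_m. (This is the concrete mechanism behind Corollary 2.7 of the paper: when every irreducible component of a subvariety W of the character torus through 1 is of the form exp(E) with E rationally defined, one has ETC₁(W) = TC₁(W).) -/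

import Mathlib

open Filter Topology Complex


/-- A ℂ-submodule of `Fin n → ℂ` is rationally defined if it is spanned by a set of
vectors all of whose coordinates are rational. -/
def RationallyDefined {n : ℕ} (V : Submodule ℂ (Fin n → ℂ)) : Prop :=
  ∃ T : Set (Fin n → ℂ),
    (∀ v ∈ T, ∀ i, ∃ q : ℚ, v i = (q : ℂ)) ∧ V = Submodule.span ℂ T

/-- The image of a subset of `Fin n → ℂ` under the componentwise exponential map. -/
def expSet {n : ℕ} (E : Set (Fin n → ℂ)) : Set (Fin n → ℂ) :=
  (fun z i => Complex.exp (z i)) '' E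

lemma den_dvd_int {q : ℚ} {D : ℕ} (h : (q.den : ℤ) ∣ (D : ℤ)) : ∃ z : ℤ, (D : ℚ) * q = z := by
  obtain ⟨c, hc⟩ := h
  refine ⟨c * q.num, ?_⟩
  have hden : (q.den : ℚ) ≠ 0 := by exact_mod_cast q.den_nz
  have : (D : ℚ) = (q.den : ℚ) * (c : ℚ) := by exact_mod_cast hc
  rw [this]
  have h2 : (q.den : ℚ) * q = (q.num : ℚ) := by
    nth_rewrite 2 [← Rat.num_div_den q]
    field_simp
  push_cast
  rw [mul_comm (q.den : ℚ) (c : ℚ), mul_assoc, h2]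

lemma exists_ratProj {n : ℕ} (E : Submodule ℂ (Fin n → ℂ)) (hE : RationallyDefined E) :
    ∃ (P : (Fin n → ℂ) →ₗ[ℂ] (Fin n → ℂ)) (D : ℕ), 0 < D ∧
      (∀ x ∈ E, P x = x) ∧ (∀ x, P x ∈ E) ∧
      ∀ v : Fin n → ℤ,
        (∀ i, ‖P (fun i => (v i : ℂ)) i - (v i : ℂ)‖ < 1 / D) →
        P (fun i => (v i : ℂ)) = fun i => (v i : ℂ) := by
  classical
  obtain ⟨T, hTrat, hTspan⟩ := hE
  -- ℚ-linear coercion map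
  let cL : (Fin n → ℚ) →ₗ[ℚ] (Fin n → ℂ) :=
    { toFun := fun v i => (v i : ℂ)
      map_add' := by intro a b; funext i; push_cast; simp
      map_smul' := by intro q a; funext i; push_cast; simp [Rat.smul_def] }
  let F : Submodule ℚ (Fin n → ℚ) := (E.restrictScalars ℚ).comap cL
  obtain ⟨G, hG⟩ := F.exists_isCompl
  let Pq : (Fin n → ℚ) →ₗ[ℚ] (Fin n → ℚ) := F.subtype.comp (F.projectionOnto G hG)
  have hPqF : ∀ v ∈ F, Pq v = v := by
    intro v hv
    have := Submodule.projectionOnto_apply_left hG ⟨v, hv⟩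
    simp only [Pq, LinearMap.comp_apply, Submodule.subtype_apply]
    rw [this]
  have hPqrange : ∀ v, Pq v ∈ F := fun v => (F.projectionOnto G hG v).2
  let M : Matrix (Fin n) (Fin n) ℚ := LinearMap.toMatrix' Pq
  have hM : ∀ v, Pq v = M.mulVec v := by
    intro v
    rw [← Matrix.toLin'_apply, Matrix.toLin'_toMatrix']
  let f : ℚ →+* ℂ := Rat.castHom ℂ
  let P : (Fin n → ℂ) →ₗ[ℂ] (Fin n → ℂ) := (M.map f).mulVecLin
  have hkey : ∀ v : Fin n → ℚ, P (fun i => (v i : ℂ)) = fun i => ((Pq v) i : ℂ) := by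
    intro v
    funext i
    have := (RingHom.map_mulVec f M v i).symm
    simp only [Matrix.mulVecLin_apply, P]
    rw [hM]
    exact this
  -- P is the identity on E
  have hPE : ∀ x ∈ E, P x = x := by
    have hle : E ≤ LinearMap.eqLocus P LinearMap.id := by
      rw [hTspan]
      apply Submodule.span_le.2
      intro v hv
      choose w hw using hTrat v hv
      have hveq : v = fun i => (w i : ℂ) := funext hw
      have hwF : w ∈ F := by
        have hcw : cL w = v := by funext i; exact (hw i).symm
        have : cL w ∈ E := by rw [hcw, hTspan]; exact Submodule.subset_span hv
        exact this
      show P v = LinearMap.id v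
      simp only [LinearMap.id_apply]
      rw [hveq, hkey w, hPqF w hwF]
    intro x hx
    exact hle hx
  -- P maps everything into E
  have hPmem : ∀ x, P x ∈ E := by
    intro x
    have hx : P x ∈ LinearMap.range P := LinearMap.mem_range_self _ x
    rw [Matrix.range_mulVecLin] at hx
    revert hx
    refine fun hx => Submodule.span_le.2 ?_ hx
    rintro col ⟨i, rfl⟩
    have h1 : Pq (Pi.single i 1) ∈ F := hPqrange _
    have h2 : cL (Pq (Pi.single i 1)) ∈ E := h1
    have h3 : (M.map f).transpose i = cL (Pq (Pi.single i 1)) := by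
      funext k
      show f (M k i) = (((Pq (Pi.single i 1)) k : ℚ) : ℂ)
      rw [hM]
      simp [Matrix.mulVec_single]
    rw [show (M.map f).col i = (M.map f).transpose i from rfl, h3]
    exact h2
  -- the common denominator
  let D : ℕ := ∏ p : Fin n × Fin n, (M p.1 p.2).den
  have hD : 0 < D := Finset.prod_pos fun p _ => (M p.1 p.2).pos
  -- integrality of D • Pq on integer vectors
  have hint : ∀ (w : Fin n → ℤ) (i), ∃ z : ℤ, (D : ℚ) * (Pq (fun k => (w k : ℚ))) i = z := by
    intro w i
    rw [hM]
    have hz : ∀ k : Fin n, ∃ z : ℤ, (D : ℚ) * M i k = z := by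
      intro k
      refine den_dvd_int ?_
      exact_mod_cast Finset.dvd_prod_of_mem (fun p : Fin n × Fin n => (M p.1 p.2).den)
        (Finset.mem_univ (i, k))
    choose z hz using hz
    refine ⟨∑ k, z k * w k, ?_⟩
    simp only [Matrix.mulVec, dotProduct]
    rw [Finset.mul_sum]
    push_cast
    refine Finset.sum_congr rfl fun k _ => ?_
    rw [← mul_assoc, hz k]
  refine ⟨P, D, hD, hPE, hPmem, ?_⟩
  intro v hsmall
  set w : Fin n → ℚ := fun i => (v i : ℚ) with hwdef
  have hcast : (fun i => ((w i : ℚ) : ℂ)) = fun i => ((v i : ℂ)) := by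
    funext i; push_cast; rfl
  have hw := hkey w
  rw [hcast] at hw
  have hPqw : Pq w = w := by
    funext i
    obtain ⟨z, hz⟩ := hint v i
    have hb : ‖((Pq w) i : ℂ) - (v i : ℂ)‖ < 1 / D := by
      have h := hsmall i
      rw [hw] at h
      exact h
    have hZ : ((z - D * v i : ℤ) : ℂ) = (D : ℂ) * (((Pq w) i : ℂ) - (v i : ℂ)) := by
      have hz' : (D : ℂ) * ((Pq w) i : ℂ) = (z : ℂ) := by exact_mod_cast hz
      push_cast
      rw [mul_sub, hz']
    have hZ0 : (z - D * v i : ℤ) = 0 := by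
      have h1 : ‖((z - D * v i : ℤ) : ℂ)‖ < 1 := by
        rw [hZ, norm_mul]
        have hD' : ‖(D : ℂ)‖ = (D : ℝ) := by
          simp [Complex.norm_natCast]
        rw [hD']
        calc (D : ℝ) * ‖((Pq w) i : ℂ) - (v i : ℂ)‖ < (D : ℝ) * (1 / D) :=
              mul_lt_mul_of_pos_left hb (by exact_mod_cast hD)
          _ = 1 := by field_simp
      have h2 : |((z - D * v i : ℤ) : ℝ)| < 1 := by
        have : ((z - D * v i : ℤ) : ℂ) = (((z - D * v i : ℤ) : ℝ) : ℂ) := by push_cast; ring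
        rwa [this, Complex.norm_real, Real.norm_eq_abs] at h1
      have h3 : |(z - D * v i : ℤ)| < 1 := by exact_mod_cast h2
      exact Int.abs_lt_one_iff.mp h3
    have h4 : ((Pq w) i : ℂ) = (v i : ℂ) := by
      have hDne : (D : ℂ) ≠ 0 := by exact_mod_cast hD.ne'
      have := hZ
      rw [hZ0] at this
      simp only [Int.cast_zero] at this
      have := (mul_eq_zero.mp this.symm).resolve_left hDne
      linear_combination this
    have h5 : ((Pq w) i : ℂ) = ((w i : ℚ) : ℂ) := by rw [h4]; push_cast; rfl
    exact_mod_cast h5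
  rw [hw, hPqw]
  exact hcast



lemma key_sub {n : ℕ} (E : Submodule ℂ (Fin n → ℂ)) (hE : RationallyDefined E)
    (c : ℕ → ℂ) (d : ℕ → Fin n → ℂ) (y : Fin n → ℂ)
    (hmem : ∀ k, ((fun _ => (1:ℂ)) + d k) ∈ expSet (E : Set (Fin n → ℂ)))
    (hc : Filter.Tendsto (fun k => ‖c k‖) Filter.atTop Filter.atTop)
    (hcd : Filter.Tendsto (fun k => c k • d k) Filter.atTop (nhds y)) : y ∈ E := by
  classical
  have hd0 : Tendsto d atTop (𝓝 0) := tangentConeAt.lim_zero atTop hc hcd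
  simp only [expSet, Set.mem_image] at hmem
  choose β hβE hβexp using hmem
  obtain ⟨P, D, hD, hPid, hPmem, hPint⟩ := exists_ratProj E hE
  let Pc : (Fin n → ℂ) →L[ℂ] (Fin n → ℂ) := LinearMap.toContinuousLinearMap P
  set C : ℝ := ‖Pc‖ with hC
  have hCnn : 0 ≤ C := norm_nonneg _
  have hCpos : 0 < C + 1 := by positivity
  have hDpos : (0:ℝ) < D := by exact_mod_cast hD
  set δ : ℝ := min (1/2) (1 / ((C+1) * D)) with hδ
  have hδpos : 0 < δ := by
    apply lt_min (by norm_num)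
    positivity
  set γ : ℕ → Fin n → ℂ := fun k i => Complex.log (1 + d k i) with hγdef
  have hγ0 : Tendsto γ atTop (𝓝 0) := by
    rw [tendsto_pi_nhds]
    intro i
    have hdi : Tendsto (fun k => d k i) atTop (𝓝 0) := by
      have := ((continuous_apply i).tendsto (0 : Fin n → ℂ)).comp hd0
      simpa [Function.comp_def] using this
    have h1 : Tendsto (fun k => 1 + d k i) atTop (𝓝 (1:ℂ)) := by
      simpa using tendsto_const_nhds.add hdi
    have h2 := (continuousAt_clog one_mem_slitPlane).tendsto.comp h1
    simpa [Complex.log_one, Function.comp_def, hγdef] using h2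
  have hev : ∀ᶠ k in atTop, ‖γ k‖ < δ ∧ ‖d k‖ < 1/2 := by
    filter_upwards [Metric.tendsto_nhds.mp hγ0 δ hδpos,
      Metric.tendsto_nhds.mp hd0 (1/2) (by norm_num)] with k h1 h2
    refine ⟨?_, ?_⟩
    · simpa [dist_zero_right] using h1
    · simpa [dist_zero_right] using h2
  have hmain : ∀ᶠ k in atTop, γ k ∈ E ∧ ∀ i, Complex.exp (γ k i) = 1 + d k i := by
    filter_upwards [hev] with k hk
    obtain ⟨hγs, hds⟩ := hk
    have hne : ∀ i, (1 : ℂ) + d k i ≠ 0 := by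
      intro i h0
      have h1 : ‖d k i‖ < 1/2 := lt_of_le_of_lt (norm_le_pi_norm (d k) i) hds
      have h2 : d k i = -1 := by linear_combination h0
      rw [h2] at h1
      norm_num at h1
    have hexpγ : ∀ i, Complex.exp (γ k i) = 1 + d k i := fun i => Complex.exp_log (hne i)
    have hmex : ∀ i, ∃ mzi : ℤ, β k i = γ k i + mzi * (2 * Real.pi * Complex.I) := by
      intro i
      have he : Complex.exp (β k i) = Complex.exp (γ k i) := by
        rw [hexpγ i]
        simpa using congrFun (hβexp k) i
      exact Complex.exp_eq_exp_iff_exists_int.mp he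
    choose mz hmz using hmex
    set μ : Fin n → ℂ := fun i => (mz i : ℂ) with hμ
    have hγeq : γ k = β k - (2 * Real.pi * Complex.I : ℂ) • μ := by
      funext i
      simp only [Pi.sub_apply, Pi.smul_apply, smul_eq_mul, hμ]
      rw [hmz i]; ring
    have hPγ : P (γ k) - γ k = (2 * Real.pi * Complex.I : ℂ) • (μ - P μ) := by
      rw [hγeq, map_sub, map_smul, hPid (β k) (hβE k)]
      rw [smul_sub]
      abel
    have hπ1 : (1:ℝ) ≤ 2 * Real.pi := by
      have := Real.pi_gt_three
      linarith
    have hsmallγ : (C + 1) * ‖γ k‖ < 1 / D := by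
      have h1 : ‖γ k‖ < 1 / ((C+1) * D) := lt_of_lt_of_le hγs (min_le_right _ _)
      have h2 : (C+1) * ‖γ k‖ < (C+1) * (1 / ((C+1)*D)) :=
        mul_lt_mul_of_pos_left h1 hCpos
      have h3 : (C+1) * (1 / ((C+1)*D)) = 1 / D := by
        field_simp
      linarith
    have hPμ : P μ = μ := by
      apply hPint mz
      intro i
      have h1 : ‖P (γ k) - γ k‖ ≤ (C + 1) * ‖γ k‖ := by
        calc ‖P (γ k) - γ k‖ ≤ ‖P (γ k)‖ + ‖γ k‖ := norm_sub_le _ _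
          _ ≤ C * ‖γ k‖ + ‖γ k‖ := by
              have h := Pc.le_opNorm (γ k)
              have hPc : Pc (γ k) = P (γ k) := rfl
              rw [hPc] at h
              exact add_le_add_left h _
          _ = (C+1) * ‖γ k‖ := by ring
      have h3 : ‖(P (γ k) - γ k) i‖ ≤ ‖P (γ k) - γ k‖ := norm_le_pi_norm _ i
      have h4 : (P (γ k) - γ k) i = (2 * Real.pi * Complex.I) * (μ - P μ) i := by
        rw [hPγ]; simp [smul_eq_mul]
      rw [h4, norm_mul] at h3
      have h5 : ‖(2 * Real.pi * Complex.I : ℂ)‖ = 2 * Real.pi := by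
        have e : (2 * (Real.pi:ℂ) * Complex.I) = (((2*Real.pi : ℝ)):ℂ) * Complex.I := by
          push_cast; ring
        rw [e, norm_mul, Complex.norm_real, Complex.norm_I, Real.norm_eq_abs,
          _root_.abs_of_nonneg (by positivity : (0:ℝ) ≤ 2*Real.pi), mul_one]
      rw [h5] at h3
      have h7 : 2 * Real.pi * ‖(μ - P μ) i‖ ≤ (C+1) * ‖γ k‖ := le_trans h3 h1
      have h6 : ‖P (fun i => (mz i : ℂ)) i - (mz i : ℂ)‖ = ‖(μ - P μ) i‖ := by
        have h : (μ - P μ) i = μ i - P μ i := rfl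
        rw [h, norm_sub_rev]
        try rfl
      rw [h6]
      nlinarith [norm_nonneg ((μ - P μ) i)]
    have hPμ' : P μ = μ := by
      have := hPμ
      exact this
    have hμE : μ ∈ E := hPμ' ▸ hPmem μ
    refine ⟨?_, hexpγ⟩
    rw [hγeq]
    exact E.sub_mem (hβE k) (E.smul_mem _ hμE)
  -- now show c k • γ k tends to y
  have htend : Tendsto (fun k => c k • γ k) atTop (𝓝 y) := by
    rw [tendsto_pi_nhds]
    intro i
    have hyd : Tendsto (fun k => c k * d k i) atTop (𝓝 (y i)) := by
      have := ((continuous_apply i).tendsto y).comp hcd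
      simpa [smul_eq_mul, Function.comp_def] using this
    have hγi0 : Tendsto (fun k => ‖γ k i‖) atTop (𝓝 0) := by
      have := ((continuous_apply i).tendsto (0 : Fin n → ℂ)).comp hγ0
      simpa using this.norm
    have hdiff : Tendsto (fun k => c k * γ k i - c k * d k i) atTop (𝓝 0) := by
      apply squeeze_zero_norm' (a := fun k => 2 * ‖c k * d k i‖ * ‖γ k i‖)
      · filter_upwards [hmain, hev] with k hk hk2
        obtain ⟨-, hexp⟩ := hk
        have hγle : ‖γ k i‖ ≤ 1/2 :=
          le_trans (norm_le_pi_norm _ i) (le_of_lt (lt_of_lt_of_le hk2.1 (min_le_left _ _)))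
        have hd_eq : d k i = Complex.exp (γ k i) - 1 := by rw [hexp i]; ring
        have hgd : ‖γ k i - d k i‖ ≤ ‖γ k i‖^2 := by
          have h := Complex.norm_exp_sub_one_sub_id_le (x := γ k i) (by
            linarith)
          calc ‖γ k i - d k i‖ = ‖Complex.exp (γ k i) - 1 - γ k i‖ := by
                rw [hd_eq, norm_sub_rev]
            _ ≤ ‖γ k i‖^2 := h
        have hg2x : ‖γ k i‖ ≤ 2 * ‖d k i‖ := by
          have h1 : ‖γ k i‖ ≤ ‖d k i‖ + ‖γ k i - d k i‖ := by
            calc ‖γ k i‖ = ‖d k i + (γ k i - d k i)‖ := by congr 1; ring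
              _ ≤ ‖d k i‖ + ‖γ k i - d k i‖ := norm_add_le _ _
          have hsq : ‖γ k i‖^2 ≤ (1/2) * ‖γ k i‖ := by
            have h0 := norm_nonneg (γ k i)
            nlinarith
          linarith
        calc ‖c k * γ k i - c k * d k i‖ = ‖c k‖ * ‖γ k i - d k i‖ := by
              rw [← mul_sub, norm_mul]
          _ ≤ 2 * ‖c k * d k i‖ * ‖γ k i‖ := by
              rw [norm_mul]
              have e1 : ‖c k‖ * ‖γ k i - d k i‖ ≤ ‖c k‖ * ‖γ k i‖^2 :=
                mul_le_mul_of_nonneg_left hgd (norm_nonneg _)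
              have e2 : ‖γ k i‖^2 ≤ 2*‖d k i‖*‖γ k i‖ := by
                have h0 := norm_nonneg (γ k i)
                nlinarith [hg2x]
              have e3 : ‖c k‖ * ‖γ k i‖^2 ≤ ‖c k‖ * (2*‖d k i‖*‖γ k i‖) :=
                mul_le_mul_of_nonneg_left e2 (norm_nonneg _)
              calc ‖c k‖ * ‖γ k i - d k i‖ ≤ ‖c k‖ * (2*‖d k i‖*‖γ k i‖) := le_trans e1 e3
                _ = 2 * (‖c k‖ * ‖d k i‖) * ‖γ k i‖ := by ring
      · have : Tendsto (fun k => 2 * ‖c k * d k i‖ * ‖γ k i‖) atTop (𝓝 (2 * ‖y i‖ * 0)) :=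
          ((hyd.norm.const_mul 2).mul hγi0)
        simpa using this
    have : Tendsto (fun k => (c k * γ k i - c k * d k i) + c k * d k i) atTop (𝓝 (0 + y i)) :=
      hdiff.add hyd
    simp only [sub_add_cancel, zero_add] at this
    have hcoord : (fun k => (c k • γ k) i) = fun k => c k * γ k i := by
      funext k; simp [smul_eq_mul]
    rw [hcoord]
    exact this
  have hclosed : IsClosed (E : Set (Fin n → ℂ)) := Submodule.closed_of_finiteDimensional E
  exact hclosed.mem_of_tendsto htend (hmain.mono fun k hk => E.smul_mem _ hk.1)


/-- Corollary 2.7 of the paper: if `W` is a finite union of exponentials of rationally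
defined subspaces `E₁, …, E_m`, then the exponential tangent cone and the tangent cone
of `W` at the all-ones point coincide, both being equal to `E₁ ∪ ⋯ ∪ E_m`. -/
theorem tangent_cones_of_union_exp_of_rational_subspaces
    (n m : ℕ) (E : Fin m → Submodule ℂ (Fin n → ℂ))
    (hE : ∀ j, RationallyDefined (E j)) :
    {α : Fin n → ℂ | ∀ t : ℂ,
        (fun i => Complex.exp (t * α i)) ∈ ⋃ j, expSet ((E j : Set (Fin n → ℂ)))} =
      ⋃ j, (E j : Set (Fin n → ℂ)) ∧
    tangentConeAt ℂ (⋃ j, expSet ((E j : Set (Fin n → ℂ)))) (fun _ => (1 : ℂ)) =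
      ⋃ j, (E j : Set (Fin n → ℂ)) := by
  constructor
  · ext α
    simp only [Set.mem_setOf_eq, Set.mem_iUnion]
    constructor
    · intro hα
      by_contra hnot
      push_neg at hnot
      have hcover : (Set.univ : Set ℂ) ⊆
          ⋃ (j : Fin m) (mm : Fin n → ℤ),
            {t : ℂ | t • α - (fun i => (mm i : ℂ) * (2 * Real.pi * Complex.I))
              ∈ (E j : Set (Fin n → ℂ))} := by
        intro t _
        obtain ⟨j, hj⟩ := hα t
        simp only [expSet, Set.mem_image] at hj
        obtain ⟨β, hβE, hβeq⟩ := hj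
        have hmm : ∀ i, ∃ mi : ℤ, t * α i = β i + mi * (2 * Real.pi * Complex.I) := by
          intro i
          exact Complex.exp_eq_exp_iff_exists_int.mp (congrFun hβeq i).symm
        choose mm hmm using hmm
        refine Set.mem_iUnion.mpr ⟨j, Set.mem_iUnion.mpr ⟨mm, ?_⟩⟩
        have e : t • α - (fun i => (mm i : ℂ) * (2 * Real.pi * Complex.I)) = β := by
          funext i
          simp only [Pi.sub_apply, Pi.smul_apply, smul_eq_mul]
          rw [hmm i]; ring
        show t • α - (fun i => (mm i : ℂ) * (2 * Real.pi * Complex.I))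
            ∈ (E j : Set (Fin n → ℂ))
        rw [e]
        exact hβE
      have hsub : ∀ (j : Fin m) (mm : Fin n → ℤ),
          Set.Subsingleton {t : ℂ | t • α - (fun i => (mm i : ℂ) * (2 * Real.pi * Complex.I))
            ∈ (E j : Set (Fin n → ℂ))} := by
        intro j mm t1 h1 t2 h2
        simp only [Set.mem_setOf_eq] at h1 h2
        by_contra hne
        refine hnot j ?_
        have h3 := (E j).sub_mem h1 h2
        have e : (t1 • α - fun i => (mm i : ℂ) * (2 * Real.pi * Complex.I)) -
            (t2 • α - fun i => (mm i : ℂ) * (2 * Real.pi * Complex.I)) = (t1 - t2) • α := by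
          rw [sub_smul]; abel
        rw [e] at h3
        have h4 := (E j).smul_mem (t1 - t2)⁻¹ h3
        rwa [inv_smul_smul₀ (sub_ne_zero.mpr hne)] at h4
      have hcnt : (Set.univ : Set ℂ).Countable :=
        Set.Countable.mono hcover
          (Set.countable_iUnion fun j => Set.countable_iUnion fun mm => (hsub j mm).countable)
      have h1 : Countable ℂ := Set.countable_univ_iff.mp hcnt
      have h2 : Uncountable ℂ := Complex.ofReal_injective.uncountable
      exact not_countable h1
    · rintro ⟨j, hj⟩ t
      refine ⟨j, ?_⟩
      refine ⟨t • α, (E j).smul_mem t hj, ?_⟩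
      funext i
      simp [smul_eq_mul]
  · ext y
    constructor
    · intro hy
      obtain ⟨c, d, hc, hmem, hcd⟩ := mem_tangentConeAt_iff_exists_seq_norm_tendsto_atTop.mp hy
      have hfreq : ∃ j, ∃ᶠ k in atTop,
          ((fun _ => (1:ℂ)) + d k) ∈ expSet ((E j : Set (Fin n → ℂ))) := by
        by_contra h
        push_neg at h
        have hall : ∀ᶠ k in atTop, ∀ j,
            ((fun _ => (1:ℂ)) + d k) ∉ expSet ((E j : Set (Fin n → ℂ))) :=
          Filter.eventually_all.mpr fun j => h j
        obtain ⟨k, hk1, hk2⟩ := (hall.and hmem).exists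
        obtain ⟨j, hj⟩ := Set.mem_iUnion.mp hk2
        exact hk1 j hj
      obtain ⟨j, hj⟩ := hfreq
      obtain ⟨φ, hφmono, hφ⟩ := Filter.extraction_of_frequently_atTop hj
      have hyE : y ∈ E j :=
        key_sub (E j) (hE j) (c ∘ φ) (d ∘ φ) y hφ
          (hc.comp hφmono.tendsto_atTop) (hcd.comp hφmono.tendsto_atTop)
      exact Set.mem_iUnion.mpr ⟨j, hyE⟩
    · intro hy
      obtain ⟨j, hj⟩ := Set.mem_iUnion.mp hy
      refine mem_tangentConeAt_iff_exists_seq_norm_tendsto_atTop.mpr ⟨fun k => ((k+1 : ℕ) : ℂ),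
        fun k => fun i => Complex.exp ((((k+1:ℕ):ℂ))⁻¹ * y i) - 1, ?_, ?_, ?_⟩
      swap
      · apply Filter.Eventually.of_forall
        intro k
        refine Set.mem_iUnion.mpr ⟨j, ?_⟩
        refine ⟨(((k+1:ℕ):ℂ))⁻¹ • y, (E j).smul_mem _ hj, ?_⟩
        funext i
        simp [smul_eq_mul]
      · have h1 : Tendsto (fun k : ℕ => ((k+1:ℕ):ℝ)) atTop atTop :=
          tendsto_natCast_atTop_atTop.comp (tendsto_add_atTop_nat 1)
        exact h1.congr fun k => (Complex.norm_natCast _).symm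
      · rw [tendsto_pi_nhds]
        intro i
        have hf : HasDerivAt (fun t : ℂ => Complex.exp (t * y i)) (y i) 0 := by
          have h0 : HasDerivAt (fun t : ℂ => t * y i) (y i) 0 := hasDerivAt_mul_const (y i)
          have h1 := h0.cexp
          simpa using h1
        have hslope := hasDerivAt_iff_tendsto_slope.mp hf
        have htk : Tendsto (fun k : ℕ => (((k+1:ℕ):ℂ))⁻¹) atTop (𝓝[≠] (0:ℂ)) := by
          apply tendsto_nhdsWithin_of_tendsto_nhds_of_eventually_within
          · have h2 : Tendsto (fun k : ℕ => (((k+1:ℕ):ℝ))⁻¹) atTop (𝓝 0) :=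
              tendsto_inv_atTop_zero.comp
                (tendsto_natCast_atTop_atTop.comp (tendsto_add_atTop_nat 1))
            have h3 := (Complex.continuous_ofReal.tendsto 0).comp h2
            apply h3.congr
            intro k
            push_cast
            simp
          · apply Filter.Eventually.of_forall
            intro k
            have : (((k+1:ℕ):ℂ)) ≠ 0 := by
              exact_mod_cast Nat.succ_ne_zero k
            simp only [Set.mem_compl_iff, Set.mem_singleton_iff, inv_eq_zero]
            exact_mod_cast this
        have hcomp := hslope.comp htk
        apply hcomp.congr
        intro k
        have hne : (((k+1:ℕ):ℂ)) ≠ 0 := by exact_mod_cast Nat.succ_ne_zero k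
        show slope (fun t : ℂ => Complex.exp (t * y i)) 0 ((((k+1:ℕ):ℂ))⁻¹) = _
        rw [slope_def_field]
        simp only [Pi.smul_apply, smul_eq_mul, zero_mul, Complex.exp_zero]
        rw [sub_zero, div_eq_mul_inv, inv_inv, mul_comm]
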